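/- If two graph sequences 𝒢 and ℋ are coarsely equivalent and c(𝒢) = 1, then c(ℋ) = 1. In other words, having cost equal to 1 is an invariant of coarse equivalence of graph sequences. -/

import Mathlib

open Filter Topology

/-- A graph sequence: finite connected graphs of uniformly bounded degree whose
number of vertices tends to infinity. -/
structure GraphSeq (V : ℕ → Type*) where
  G : ∀ n, SimpleGraph (V n)
  finite : ∀ n, Finite (V n)
  connected : ∀ n, (G n).Connected
  degBound : ℕ
  deg_le : ∀ n, ∀ x : V n, ((G n).neighborSet x).ncard ≤ degBound
  card_tendsto : Tendsto (fun n => Nat.card (V n)) atTop atTop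

/-- The edge number `e(𝒢) = liminf |E(G_n)|/|V(G_n)|`. -/
noncomputable def GraphSeq.edgeNumber {V : ℕ → Type*} (Gs : GraphSeq V) : ℝ :=
  liminf (fun n => (((Gs.G n).edgeSet.ncard : ℝ)) / (Nat.card (V n) : ℝ)) atTop

/-- Bi-Lipschitz equivalence `𝒢 ≃ ℋ` of graph sequences on the same vertex sets. -/
def GraphSeq.equivSeq {V : ℕ → Type*} (Gs Hs : GraphSeq V) : Prop :=
  ∃ L : ℕ, 0 < L ∧ ∀ n, ∀ x y : V n,
    (Hs.G n).dist x y ≤ L * (Gs.G n).dist x y ∧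
    (Gs.G n).dist x y ≤ L * (Hs.G n).dist x y

/-- The (combinatorial) cost `c(𝒢) = inf { e(ℋ) : ℋ ≃ 𝒢 }`. -/
noncomputable def GraphSeq.cost {V : ℕ → Type*} (Gs : GraphSeq V) : ℝ :=
  sInf { x : ℝ | ∃ Hs : GraphSeq V, Gs.equivSeq Hs ∧ x = Hs.edgeNumber }

/-- Coarse equivalence of graph sequences: a uniform `(A,A)`-quasi-isometry levelwise. -/
def coarseEquiv {V W : ℕ → Type*} (Gs : GraphSeq V) (Hs : GraphSeq W) : Prop :=
  ∃ A : ℝ, 0 < A ∧ ∀ n, ∃ f : V n → W n,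
    (∀ x y : V n,
      ((Gs.G n).dist x y : ℝ) / A - A ≤ ((Hs.G n).dist (f x) (f y) : ℝ) ∧
      ((Hs.G n).dist (f x) (f y) : ℝ) ≤ A * ((Gs.G n).dist x y : ℝ) + A) ∧
    (∀ w : W n, ∃ x : V n, ((Hs.G n).dist (f x) w : ℝ) ≤ A)

/-- Hyperfiniteness of a family of graphs. -/
def hyperfiniteFam {V : ℕ → Type*} (G : ∀ n, SimpleGraph (V n)) : Prop :=
  ∀ ε : ℝ, 0 < ε → ∃ K : ℕ, 0 < K ∧ ∃ E : ∀ n, Set (Sym2 (V n)),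
    (∀ n, E n ⊆ (G n).edgeSet) ∧
    limsup (fun n => (((E n).ncard : ℝ)) / (Nat.card (V n) : ℝ)) atTop < ε ∧
    ∀ n, ∀ x : V n, {y | ((G n).deleteEdges (E n)).Reachable x y}.ncard ≤ K

def GraphSeq.hyperfinite {V : ℕ → Type*} (Gs : GraphSeq V) : Prop :=
  hyperfiniteFam Gs.G

/-- Property A for a family of graphs. -/
def propertyAFam {V : ℕ → Type*} (G : ∀ n, SimpleGraph (V n)) : Prop :=
  ∀ ε : ℝ, 0 < ε → ∃ S : ℕ, 0 < S ∧ ∀ n, ∃ ξ : V n → V n → ℝ,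
    (∀ x, ∑ᶠ y, |ξ x y| = 1) ∧
    (∀ x y, ξ x y ≠ 0 → (G n).dist x y ≤ S) ∧
    (∀ x y, (G n).Adj x y → ∑ᶠ z, |ξ x z - ξ y z| < ε)

def GraphSeq.propertyA {V : ℕ → Type*} (Gs : GraphSeq V) : Prop :=
  propertyAFam Gs.G

/-- Property almost-A: one may delete a vanishing proportion of vertices to get property A. -/
def GraphSeq.almostA {V : ℕ → Type*} (Gs : GraphSeq V) : Prop :=
  ∃ V' : ∀ n, Set (V n),
    Tendsto (fun n => (((V' n).ncard : ℝ)) / (Nat.card (V n) : ℝ)) atTop (𝓝 0) ∧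
    propertyAFam (fun n => (Gs.G n).induce ((V' n)ᶜ))

/-- The set of edges of `G` with exactly one endpoint in `F`. -/
def edgeBoundary {V : Type*} (G : SimpleGraph V) (F : Set V) : Set (Sym2 V) :=
  {e | e ∈ G.edgeSet ∧ ∃ x y, e = s(x, y) ∧ x ∈ F ∧ y ∉ F}

/-- The Cayley graph of a group with respect to a set `S`. -/
def cayleyGraph (Γ : Type*) [Group Γ] (S : Set Γ) : SimpleGraph Γ :=
  SimpleGraph.fromRel (fun x y => ∃ s ∈ S, y = x * s)

/-- The simple graph underlying an `S`-labelled graph given by label maps `lab`. -/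
def labGraph {Γ V : Type*} (S : Set Γ) (lab : Γ → V → V) : SimpleGraph V :=
  SimpleGraph.fromRel (fun x y => ∃ s ∈ S, y = lab s x)

/-- Right multiplication by `s` on the right cosets of `H`. -/
def schreierMul {Γ : Type*} [Group Γ] (H : Subgroup Γ) (s : Γ) :
    Quotient (QuotientGroup.rightRel H) → Quotient (QuotientGroup.rightRel H) :=
  Quotient.map (fun g => g * s) (fun a b hab => by
    have h := (QuotientGroup.rightRel_apply).mp hab
    exact (QuotientGroup.rightRel_apply).mpr (by
      simpa [mul_assoc] using h))

/-- The Schreier graph `Sch(Γ, H, S)` on the right cosets of `H`. -/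
def schreierGraph {Γ : Type*} [Group Γ] (H : Subgroup Γ) (S : Set Γ) :
    SimpleGraph (Quotient (QuotientGroup.rightRel H)) :=
  labGraph S (fun s => schreierMul H s)

/-- The rooted labelled `r`-ball of the labelled graph `lab` at `x` is isomorphic to
the `r`-ball around the identity in `Cay(Γ, S)`. -/
def ballIso {Γ : Type*} [Group Γ] (S : Set Γ) {V : Type*} (lab : Γ → V → V)
    (x : V) (r : ℕ) : Prop :=
  ∃ f : Γ → V, f 1 = x ∧
    (∀ g g' : Γ, (cayleyGraph Γ S).dist 1 g ≤ r → (cayleyGraph Γ S).dist 1 g' ≤ r →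
      f g = f g' → g = g') ∧
    (∀ g : Γ, (cayleyGraph Γ S).dist 1 g < r → ∀ s ∈ S, f (g * s) = lab s (f g)) ∧
    (∀ v : V, (labGraph S lab).dist x v ≤ r →
      ∃ g : Γ, (cayleyGraph Γ S).dist 1 g ≤ r ∧ f g = v)

/-- Benjamini–Schramm convergence of the `S`-labelled graphs given by `lab` to `Cay(Γ, S)`. -/
def BSConv {Γ : Type*} [Group Γ] (S : Set Γ) {V : ℕ → Type*}
    (lab : ∀ n, Γ → V n → V n) : Prop :=
  ∀ r : ℕ, Tendsto
    (fun n => ((Nat.card {x : V n // ballIso S (lab n) x r} : ℝ)) / (Nat.card (V n) : ℝ))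
    atTop (𝓝 1)

/-- A sofic approximation of `Γ`: a graph sequence labelled by `S` which
Benjamini–Schramm converges to `Cay(Γ, S)`. -/
def IsSoficApprox {Γ : Type*} [Group Γ] (S : Set Γ) {V : ℕ → Type*} (Gs : GraphSeq V)
    (lab : ∀ n, Γ → V n → V n) : Prop :=
  (∀ n, Gs.G n = labGraph S (lab n)) ∧ BSConv S lab

/-- Amenability via Følner sets with respect to the generating set `S`. -/
def FolnerAmenable {Γ : Type*} [Group Γ] (S : Set Γ) : Prop :=
  ∀ ε : ℝ, 0 < ε → ∃ F : Set Γ, F.Finite ∧ F.Nonempty ∧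
    ∀ g ∈ S, ((symmDiff ((fun x => g * x) '' F) F).ncard : ℝ) < ε * (F.ncard : ℝ)



section MyAux
open SimpleGraph

section BasicGraph

variable {V : Type} {G : SimpleGraph V}

/-- From a vertex at positive distance to `n`, there is a neighbor strictly closer to `n`. -/
lemma my_exists_adj_dist_lt {x n : V} (h : G.dist x n ≠ 0) :
    ∃ y, G.Adj x y ∧ G.dist y n < G.dist x n := by
  obtain ⟨p, hp⟩ := (SimpleGraph.Reachable.of_dist_ne_zero h).exists_walk_length_eq_dist
  cases p with
  | nil => exact absurd SimpleGraph.dist_self h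
  | cons hadj q =>
      refine ⟨_, hadj, lt_of_le_of_lt (SimpleGraph.dist_le q) ?_⟩
      simp only [SimpleGraph.Walk.length_cons] at hp
      omega

/-- In a connected graph, distances from a fixed vertex bound along walks. -/
lemma my_dist_le_mul_walk {W : Type} {H H' : SimpleGraph W} (hH : H.Connected) (B : ℕ)
    (hedge : ∀ a b : W, H'.Adj a b → H.dist a b ≤ B) :
    ∀ {u v : W} (p : H'.Walk u v), H.dist u v ≤ B * p.length := by
  intro u v p
  induction p with
  | nil => simp
  | cons h q ih =>
      calc H.dist _ _ ≤ H.dist _ _ + H.dist _ _ := hH.dist_triangle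
        _ ≤ B + B * q.length := Nat.add_le_add (hedge _ _ h) ih
        _ = B * (q.length + 1) := by ring
        _ = B * (SimpleGraph.Walk.cons h q).length := by simp

end BasicGraph


section Core
variable {V : Type} {G : SimpleGraph V}



lemma my_ncard_biUnion_le {α β : Type} [Finite α] [Finite β] (s : Set α) (t : α → Set β)
    (m : ℕ) (h : ∀ z ∈ s, (t z).ncard ≤ m) : (⋃ z ∈ s, t z).ncard ≤ s.ncard * m := by
  classical
  have := Fintype.ofFinite α
  have := Fintype.ofFinite β
  have he : (⋃ z ∈ s, t z).toFinset = s.toFinset.biUnion (fun z => (t z).toFinset) := by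
    ext b; simp
  rw [Set.ncard_eq_toFinset_card', he, Set.ncard_eq_toFinset_card' s]
  refine le_trans (Finset.card_biUnion_le) ?_
  calc ∑ z ∈ s.toFinset, (t z).toFinset.card ≤ ∑ z ∈ s.toFinset, m := by
        refine Finset.sum_le_sum (fun z hz => ?_)
        rw [← Set.ncard_eq_toFinset_card']
        exact h z (by simpa using hz)
    _ = s.toFinset.card * m := by rw [Finset.sum_const, smul_eq_mul]

/-- Ball size bound in a bounded degree connected graph. -/
lemma my_ball_ncard_le [Finite V] (hconn : G.Connected)
    (d : ℕ) (hd : ∀ v : V, (G.neighborSet v).ncard ≤ d) (x : V) (k : ℕ) :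
    {y | G.dist x y ≤ k}.ncard ≤ (d + 1) ^ k := by
  classical
  have := Fintype.ofFinite V
  induction k with
  | zero =>
      have hsub : {y | G.dist x y ≤ 0} ⊆ {x} := by
        intro y hy
        simp only [Set.mem_setOf_eq, Nat.le_zero] at hy
        have := (hconn.dist_eq_zero_iff (u := x) (v := y)).mp hy
        simp [this.symm]
      simpa using Set.ncard_le_ncard hsub (Set.finite_singleton x)
  | succ k ih =>
      have hsub : {y | G.dist x y ≤ k + 1} ⊆
          ⋃ z ∈ {y | G.dist x y ≤ k}, ({z} ∪ G.neighborSet z) := by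
        intro y hy
        simp only [Set.mem_setOf_eq] at hy
        by_cases h0 : G.dist y x = 0
        · have hxy : y = x := (hconn.dist_eq_zero_iff).mp h0
          refine Set.mem_biUnion (show x ∈ {y | G.dist x y ≤ k} by simp [SimpleGraph.dist_self]) ?_
          simp [hxy]
        · obtain ⟨z, hz, hlt⟩ := my_exists_adj_dist_lt h0
          have hzk : G.dist x z ≤ k := by
            rw [SimpleGraph.dist_comm]
            rw [SimpleGraph.dist_comm] at hy
            omega
          exact Set.mem_biUnion hzk (by simp [SimpleGraph.mem_neighborSet, hz.symm])
      refine le_trans (Set.ncard_le_ncard hsub (Set.toFinite _)) ?_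
      have hfin : ∀ z : V, ({z} ∪ G.neighborSet z).ncard ≤ d + 1 := by
        intro z
        refine le_trans (Set.ncard_union_le _ _) ?_
        have := hd z
        have h1 : ({z} : Set V).ncard = 1 := Set.ncard_singleton z
        omega
      calc (⋃ z ∈ {y | G.dist x y ≤ k}, ({z} ∪ G.neighborSet z)).ncard
          ≤ {y | G.dist x y ≤ k}.ncard * (d+1) :=
            my_ncard_biUnion_le _ _ _ (fun z _ => hfin z)
        _ ≤ (d+1)^k * (d+1) := Nat.mul_le_mul_right _ ih
        _ = (d+1)^(k+1) := by ring

noncomputable section NetMachinery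

/-- Distance from `x` to the set `N`. -/
def Dfun (G : SimpleGraph V) (N : Set V) (x : V) : ℕ := sInf ((G.dist x) '' N)

open scoped Classical in
/-- Voronoi-type retraction onto the net `N`, following neighbors that decrease `Dfun`. -/
def nuFn (G : SimpleGraph V) (N : Set V) (x : V) : V :=
  if h : ∃ y, G.Adj x y ∧ Dfun G N y < Dfun G N x then nuFn G N h.choose else x
termination_by Dfun G N x
decreasing_by exact h.choose_spec.2

variable {N : Set V}

lemma Dfun_le {x n : V} (hn : n ∈ N) : Dfun G N x ≤ G.dist x n :=
  Nat.sInf_le ⟨n, hn, rfl⟩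

lemma Dfun_exists (hN : N.Nonempty) (x : V) : ∃ n ∈ N, G.dist x n = Dfun G N x := by
  obtain ⟨n, hn⟩ := hN
  have : ((G.dist x) '' N).Nonempty := ⟨_, n, hn, rfl⟩
  obtain ⟨m, hm, he⟩ := Nat.sInf_mem this
  exact ⟨m, hm, he⟩

lemma Dfun_eq_zero_iff (hconn : G.Connected) (hN : N.Nonempty) {x : V} :
    Dfun G N x = 0 ↔ x ∈ N := by
  constructor
  · intro h
    obtain ⟨n, hn, he⟩ := Dfun_exists hN x
    rw [h] at he
    rwa [(hconn.dist_eq_zero_iff).mp he]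
  · intro h
    have h2 : Dfun G N x ≤ G.dist x x := Dfun_le h
    simpa [SimpleGraph.dist_self] using h2

lemma Dfun_step (hconn : G.Connected) (hN : N.Nonempty) {x : V} (h : Dfun G N x ≠ 0) :
    ∃ y, G.Adj x y ∧ Dfun G N y < Dfun G N x := by
  obtain ⟨n, hn, he⟩ := Dfun_exists hN x
  have hne : G.dist x n ≠ 0 := by rw [he]; exact h
  obtain ⟨y, hadj, hlt⟩ := my_exists_adj_dist_lt hne
  exact ⟨y, hadj, lt_of_le_of_lt (Dfun_le hn) (he ▸ hlt)⟩

lemma nuFn_mem (hconn : G.Connected) (hN : N.Nonempty) (x : V) : nuFn G N x ∈ N := by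
  generalize hk : Dfun G N x = k
  induction k using Nat.strong_induction_on generalizing x with
  | _ k ih =>
    rw [nuFn]
    by_cases h : ∃ y, G.Adj x y ∧ Dfun G N y < Dfun G N x
    · rw [dif_pos h]
      exact ih _ (hk ▸ h.choose_spec.2) _ rfl
    · rw [dif_neg h]
      by_contra hx
      exact h (Dfun_step hconn hN (fun h0 => hx ((Dfun_eq_zero_iff hconn hN).mp h0)))

lemma nuFn_dist (hconn : G.Connected) (hN : N.Nonempty) (x : V) :
    G.dist x (nuFn G N x) ≤ Dfun G N x := by
  generalize hk : Dfun G N x = k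
  induction k using Nat.strong_induction_on generalizing x with
  | _ k ih =>
    rw [nuFn]
    by_cases h : ∃ y, G.Adj x y ∧ Dfun G N y < Dfun G N x
    · rw [dif_pos h]
      have h2 := h.choose_spec.2
      have h1 := h.choose_spec.1
      have hstep := ih _ (hk ▸ h2) h.choose rfl
      have hd1 : G.dist x h.choose = 1 := SimpleGraph.dist_eq_one_iff_adj.mpr h1
      calc G.dist x (nuFn G N h.choose)
          ≤ G.dist x h.choose + G.dist h.choose (nuFn G N h.choose) := hconn.dist_triangle
        _ ≤ k := by omega
    · rw [dif_neg h]
      simp [SimpleGraph.dist_self]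

lemma nuFn_fix (hconn : G.Connected) (hN : N.Nonempty) {x : V} (hx : x ∈ N) :
    nuFn G N x = x := by
  rw [nuFn, dif_neg]
  rintro ⟨y, -, hlt⟩
  have : Dfun G N x = 0 := (Dfun_eq_zero_iff hconn hN).mpr hx
  omega

end NetMachinery

noncomputable section StepCounting

open scoped Classical in
/-- The chosen distance-decreasing neighbor. -/
def stepFn (G : SimpleGraph V) (N : Set V) (x : V) : V :=
  if h : ∃ y, G.Adj x y ∧ Dfun G N y < Dfun G N x then h.choose else x

variable {N : Set V}

lemma stepFn_spec {x : V} (h : ∃ y, G.Adj x y ∧ Dfun G N y < Dfun G N x) :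
    G.Adj x (stepFn G N x) ∧ Dfun G N (stepFn G N x) < Dfun G N x := by
  classical
  rw [stepFn, dif_pos h]
  exact ⟨h.choose_spec.1, h.choose_spec.2⟩

lemma nuFn_step {x : V} (h : ∃ y, G.Adj x y ∧ Dfun G N y < Dfun G N x) :
    nuFn G N x = nuFn G N (stepFn G N x) := by
  classical
  conv_lhs => rw [nuFn]
  rw [dif_pos h, stepFn, dif_pos h]

lemma guard_iff (hconn : G.Connected) (hN : N.Nonempty) {x : V} :
    (∃ y, G.Adj x y ∧ Dfun G N y < Dfun G N x) ↔ Dfun G N x ≠ 0 := by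
  constructor
  · rintro ⟨y, -, hlt⟩ h0
    omega
  · exact Dfun_step hconn hN

lemma step_injOn (hconn : G.Connected) (hN : N.Nonempty) :
    Set.InjOn (fun x => s(x, stepFn G N x)) {x | Dfun G N x ≠ 0} := by
  intro x hx x' hx' he
  simp only [Set.mem_setOf_eq] at hx hx'
  simp only at he
  rcases Sym2.eq_iff.mp he with ⟨h1, -⟩ | ⟨h1, h2⟩
  · exact h1
  · exfalso
    have a1 := (stepFn_spec ((guard_iff hconn hN).mpr hx)).2
    have a2 := (stepFn_spec ((guard_iff hconn hN).mpr hx')).2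
    rw [h2] at a1
    rw [← h1] at a2
    omega

/-- Lower bound: a finite connected graph has at least `|V| - 1` edges. -/
lemma card_le_edge_add_one (G : SimpleGraph V) [Finite V] (hconn : G.Connected) :
    Nat.card V ≤ G.edgeSet.ncard + 1 := by
  classical
  have hne : Nonempty V := hconn.nonempty
  obtain ⟨v₀⟩ := hne
  set N : Set V := {v₀} with hNdef
  have hN : N.Nonempty := ⟨v₀, rfl⟩
  set Dset : Set V := {x | Dfun G N x ≠ 0} with hDdef
  have himg : (fun x => s(x, stepFn G N x)) '' Dset ⊆ G.edgeSet := by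
    rintro e ⟨x, hx, rfl⟩
    exact (stepFn_spec ((guard_iff hconn hN).mpr hx)).1
  have hcard : Dset.ncard ≤ G.edgeSet.ncard := by
    rw [← Set.ncard_image_of_injOn (step_injOn hconn hN)]
    exact Set.ncard_le_ncard himg (Set.toFinite _)
  have hcompl : Dsetᶜ = N := by
    ext x
    simp only [hDdef, Set.mem_compl_iff, Set.mem_setOf_eq, not_not]
    exact Dfun_eq_zero_iff hconn hN
  have hsum := Set.ncard_add_ncard_compl Dset (Set.toFinite _)
  rw [hcompl, hNdef, Set.ncard_singleton] at hsum
  omega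

/-- Upper bound: at most `d * |V|` edges in a graph with degrees at most `d`. -/
lemma edge_le_deg_mul_card (G : SimpleGraph V) [Finite V] (d : ℕ)
    (hd : ∀ v : V, (G.neighborSet v).ncard ≤ d) :
    G.edgeSet.ncard ≤ d * Nat.card V := by
  classical
  have := Fintype.ofFinite V
  have h2 := SimpleGraph.sum_degrees_eq_twice_card_edges G
  have hdeg : ∀ v : V, G.degree v ≤ d := by
    intro v
    have := hd v
    rw [← SimpleGraph.card_neighborSet_eq_degree]
    rwa [← Nat.card_coe_set_eq, Nat.card_eq_fintype_card] at this
  have hle : ∑ v : V, G.degree v ≤ ∑ _v : V, d := Finset.sum_le_sum (fun v _ => hdeg v)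
  rw [Finset.sum_const, smul_eq_mul] at hle
  have hE : G.edgeSet.ncard = G.edgeFinset.card := by
    rw [Set.ncard_eq_toFinset_card']
    unfold SimpleGraph.edgeFinset
    congr
  rw [Nat.card_eq_fintype_card, ← Finset.card_univ, hE, mul_comm]
  omega

end StepCounting

noncomputable section Transfer

variable {W : Type}

open scoped Classical in
/-- A representative in `W` of an element of `V` in the range of `g`. -/
def repN [Nonempty W] (g : W → V) (v : V) : W :=
  if h : ∃ w, g w = v then h.choose else Classical.arbitrary W

lemma g_repN [Nonempty W] {g : W → V} {v : V} (h : v ∈ Set.range g) : g (repN g v) = v := by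
  obtain ⟨w, hw⟩ := h
  rw [repN, dif_pos ⟨w, hw⟩]
  exact (⟨w, hw⟩ : ∃ w, g w = v).choose_spec

/-- Map `x : V` to the representative of its Voronoi center. -/
def rho [Nonempty W] (G' : SimpleGraph V) (g : W → V) (x : V) : W :=
  repN g (nuFn G' (Set.range g) x)

/-- The transferred graph on `W`. -/
def transG [Nonempty W] (G' : SimpleGraph V) (g : W → V) : SimpleGraph W :=
  SimpleGraph.fromRel (fun w w' =>
    w' = repN g (g w) ∨ ∃ x y, G'.Adj x y ∧ w = rho G' g x ∧ w' = rho G' g y)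

variable [Nonempty W] [Finite V] [Finite W]
variable {G' : SimpleGraph V} {H : SimpleGraph W} {f : V → W} {g : W → V} {K : ℕ}

lemma range_nonempty' (g : W → V) : (Set.range g).Nonempty := Set.range_nonempty g

lemma Dfun_bound (hG' : G'.Connected)
    (h1 : ∀ x y, G'.dist x y ≤ K * H.dist (f x) (f y) + K)
    (h3 : ∀ w, H.dist (f (g w)) w ≤ K) (x : V) :
    Dfun G' (Set.range g) x ≤ K * K + K := by
  have hle : Dfun G' (Set.range g) x ≤ G'.dist x (g (f x)) := Dfun_le ⟨f x, rfl⟩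
  have hd1 := h1 x (g (f x))
  have hd3 := h3 (f x)
  rw [SimpleGraph.dist_comm] at hd3
  have : K * H.dist (f x) (f (g (f x))) ≤ K * K := Nat.mul_le_mul_left _ hd3
  omega

lemma rep_close (h3 : ∀ w, H.dist (f (g w)) w ≤ K) {v : V} (hv : v ∈ Set.range g) :
    H.dist (f v) (repN g v) ≤ K := by
  have := h3 (repN g v)
  rwa [g_repN hv] at this

lemma rho_close (hG' : G'.Connected) (h3 : ∀ w, H.dist (f (g w)) w ≤ K) (x : V) :
    H.dist (f (nuFn G' (Set.range g) x)) (rho G' g x) ≤ K :=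
  rep_close h3 (nuFn_mem hG' (range_nonempty' g) x)

lemma rho_pair (hG' : G'.Connected) (hH : H.Connected)
    (h1 : ∀ x y, G'.dist x y ≤ K * H.dist (f x) (f y) + K)
    (h2 : ∀ x y, H.dist (f x) (f y) ≤ K * G'.dist x y + K)
    (h3 : ∀ w, H.dist (f (g w)) w ≤ K) {x y : V} (hadj : G'.Adj x y) :
    H.dist (rho G' g x) (rho G' g y) ≤ 2 * K + (K * (2 * (K * K + K) + 1) + K) := by
  set N := Set.range g
  have hN : N.Nonempty := range_nonempty' g
  have hd : G'.dist (nuFn G' N x) (nuFn G' N y) ≤ 2 * (K * K + K) + 1 := by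
    have t1 : G'.dist (nuFn G' N x) x ≤ K * K + K := by
      rw [SimpleGraph.dist_comm]
      exact le_trans (nuFn_dist hG' hN x) (Dfun_bound hG' h1 h3 x)
    have t2 : G'.dist y (nuFn G' N y) ≤ K * K + K :=
      le_trans (nuFn_dist hG' hN y) (Dfun_bound hG' h1 h3 y)
    have t3 : G'.dist x y = 1 := SimpleGraph.dist_eq_one_iff_adj.mpr hadj
    have tr1 : G'.dist (nuFn G' N x) (nuFn G' N y) ≤
        G'.dist (nuFn G' N x) y + G'.dist y (nuFn G' N y) := hG'.dist_triangle
    have tr2 : G'.dist (nuFn G' N x) y ≤ G'.dist (nuFn G' N x) x + G'.dist x y :=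
      hG'.dist_triangle
    omega
  have hf : H.dist (f (nuFn G' N x)) (f (nuFn G' N y)) ≤ K * (2 * (K * K + K) + 1) + K := by
    have := h2 (nuFn G' N x) (nuFn G' N y)
    have hm : K * G'.dist (nuFn G' N x) (nuFn G' N y) ≤ K * (2 * (K * K + K) + 1) :=
      Nat.mul_le_mul_left _ hd
    omega
  have c1 : H.dist (f (nuFn G' N x)) (rho G' g x) ≤ K := rho_close hG' h3 x
  have c2 : H.dist (f (nuFn G' N y)) (rho G' g y) ≤ K := rho_close hG' h3 y
  have tr1 : H.dist (rho G' g x) (rho G' g y) ≤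
      H.dist (rho G' g x) (f (nuFn G' N y)) + H.dist (f (nuFn G' N y)) (rho G' g y) :=
    hH.dist_triangle
  have tr2 : H.dist (rho G' g x) (f (nuFn G' N y)) ≤
      H.dist (rho G' g x) (f (nuFn G' N x)) + H.dist (f (nuFn G' N x)) (f (nuFn G' N y)) :=
    hH.dist_triangle
  have e1 : H.dist (rho G' g x) (f (nuFn G' N x)) = H.dist (f (nuFn G' N x)) (rho G' g x) :=
    SimpleGraph.dist_comm
  omega

/-- Every edge of the transferred graph joins points at `H`-distance at most `B₀`. -/
lemma trans_adj_bound (hG' : G'.Connected) (hH : H.Connected)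
    (h1 : ∀ x y, G'.dist x y ≤ K * H.dist (f x) (f y) + K)
    (h2 : ∀ x y, H.dist (f x) (f y) ≤ K * G'.dist x y + K)
    (h3 : ∀ w, H.dist (f (g w)) w ≤ K) :
    ∀ a b : W, (transG G' g).Adj a b →
      H.dist a b ≤ 4 * K + K * (2 * (K * K + K) + 1) := by
  have key : ∀ a b : W,
      (b = repN g (g a) ∨ ∃ x y, G'.Adj x y ∧ a = rho G' g x ∧ b = rho G' g y) →
      H.dist a b ≤ 4 * K + K * (2 * (K * K + K) + 1) := by
    rintro a b (rfl | ⟨x, y, hadj, rfl, rfl⟩)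
    · have t1 : H.dist (f (g a)) a ≤ K := h3 a
      have t2 : H.dist (f (g a)) (repN g (g a)) ≤ K := rep_close h3 ⟨a, rfl⟩
      have tr : H.dist a (repN g (g a)) ≤
          H.dist a (f (g a)) + H.dist (f (g a)) (repN g (g a)) := hH.dist_triangle
      rw [SimpleGraph.dist_comm (u := a) (v := f (g a))] at tr
      omega
    · have := rho_pair hG' hH h1 h2 h3 hadj
      omega
  intro a b hadj
  rw [transG, SimpleGraph.fromRel_adj] at hadj
  rcases hadj.2 with h | h
  · exact key a b h
  · rw [SimpleGraph.dist_comm]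
    exact key b a h

lemma rho_step {x y : V} (hadj : G'.Adj x y) :
    rho G' g x = rho G' g y ∨ (transG G' g).Adj (rho G' g x) (rho G' g y) := by
  by_cases he : rho G' g x = rho G' g y
  · exact Or.inl he
  · refine Or.inr ?_
    rw [transG, SimpleGraph.fromRel_adj]
    exact ⟨he, Or.inl (Or.inr ⟨x, y, hadj, rfl, rfl⟩)⟩

lemma reach_rho {x y : V} (p : G'.Walk x y) :
    (transG G' g).Reachable (rho G' g x) (rho G' g y) := by
  induction p with
  | nil => exact ⟨SimpleGraph.Walk.nil⟩
  | cons h q ih =>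
      rcases rho_step (g := g) h with he | ha
      · rwa [he]
      · exact ha.reachable.trans ih

lemma rho_g (hG' : G'.Connected) (w : W) : rho G' g (g w) = repN g (g w) := by
  rw [rho, nuFn_fix hG' (range_nonempty' g) ⟨w, rfl⟩]

lemma reach_to_rep (hG' : G'.Connected) (w : W) :
    (transG G' g).Reachable w (repN g (g w)) := by
  by_cases he : w = repN g (g w)
  · rw [← he]
  · refine SimpleGraph.Adj.reachable ?_
    rw [transG, SimpleGraph.fromRel_adj]
    exact ⟨he, Or.inl (Or.inl rfl)⟩

lemma transG_connected (hG' : G'.Connected) : (transG G' g).Connected := by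
  rw [SimpleGraph.connected_iff]
  refine ⟨fun w w' => ?_, inferInstance⟩
  obtain ⟨p⟩ := hG'.preconnected (g w) (g w')
  have h1 := reach_to_rep (g := g) hG' w
  have h2 := reach_to_rep (g := g) hG' w'
  rw [← rho_g hG'] at h1 h2
  exact (h1.trans (reach_rho p)).trans h2.symm

lemma dist_rho_le (hG' : G'.Connected) {x y : V} (p : G'.Walk x y) :
    (transG G' g).dist (rho G' g x) (rho G' g y) ≤ p.length := by
  have hT := transG_connected (g := g) hG'
  induction p with
  | nil => simp [SimpleGraph.dist_self]
  | @cons u v z h q ih =>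
      have h1 : (transG G' g).dist (rho G' g u) (rho G' g v) ≤ 1 := by
        rcases rho_step (g := g) h with he | ha
        · rw [he, SimpleGraph.dist_self]; omega
        · rw [SimpleGraph.dist_eq_one_iff_adj.mpr ha]
      calc (transG G' g).dist (rho G' g u) (rho G' g z)
          ≤ (transG G' g).dist (rho G' g u) (rho G' g v)
            + (transG G' g).dist (rho G' g v) (rho G' g z) := hT.dist_triangle
        _ ≤ 1 + q.length := Nat.add_le_add h1 ih
        _ = (SimpleGraph.Walk.cons h q).length := by simp [add_comm]

/-- The transferred graph dominates `H` distances linearly. -/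
lemma trans_dist_le (hG' : G'.Connected) (hH : H.Connected)
    (h1 : ∀ x y, G'.dist x y ≤ K * H.dist (f x) (f y) + K)
    (h3 : ∀ w, H.dist (f (g w)) w ≤ K) (w w' : W) :
    (transG G' g).dist w w' ≤ (2 * K * K + 2 * K + 2) * H.dist w w' := by
  have hT := transG_connected (g := g) hG'
  set k := H.dist w w' with hk
  by_cases hk0 : k = 0
  · have : w = w' := (hH.dist_eq_zero_iff).mp hk0
    rw [this, SimpleGraph.dist_self]
    omega
  · have d1 : H.dist (f (g w)) (f (g w')) ≤ k + 2 * K := by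
      have t1 : H.dist (f (g w)) w ≤ K := h3 w
      have t2 : H.dist (f (g w')) w' ≤ K := h3 w'
      have tr1 : H.dist (f (g w)) (f (g w')) ≤
          H.dist (f (g w)) w' + H.dist w' (f (g w')) := hH.dist_triangle
      have tr2 : H.dist (f (g w)) w' ≤ H.dist (f (g w)) w + H.dist w w' := hH.dist_triangle
      have e1 : H.dist w' (f (g w')) = H.dist (f (g w')) w' := SimpleGraph.dist_comm
      omega
    have d2 : G'.dist (g w) (g w') ≤ K * (k + 2 * K) + K := by
      have := h1 (g w) (g w')
      have hm : K * H.dist (f (g w)) (f (g w')) ≤ K * (k + 2 * K) := Nat.mul_le_mul_left _ d1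
      omega
    obtain ⟨p, hp⟩ := hG'.exists_walk_length_eq_dist (g w) (g w')
    have d3 : (transG G' g).dist (rho G' g (g w)) (rho G' g (g w')) ≤ K * (k + 2 * K) + K := by
      refine le_trans (dist_rho_le hG' p) ?_
      rw [hp]; exact d2
    have d4 : (transG G' g).dist w (rho G' g (g w)) ≤ 1 := by
      rw [rho_g hG']
      by_cases he : w = repN g (g w)
      · rw [← he, SimpleGraph.dist_self]; omega
      · have : (transG G' g).Adj w (repN g (g w)) := by
          rw [transG, SimpleGraph.fromRel_adj]
          exact ⟨he, Or.inl (Or.inl rfl)⟩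
        rw [SimpleGraph.dist_eq_one_iff_adj.mpr this]
    have d5 : (transG G' g).dist w' (rho G' g (g w')) ≤ 1 := by
      rw [rho_g hG']
      by_cases he : w' = repN g (g w')
      · rw [← he, SimpleGraph.dist_self]; omega
      · have : (transG G' g).Adj w' (repN g (g w')) := by
          rw [transG, SimpleGraph.fromRel_adj]
          exact ⟨he, Or.inl (Or.inl rfl)⟩
        rw [SimpleGraph.dist_eq_one_iff_adj.mpr this]
    have tr1 : (transG G' g).dist w w' ≤
        (transG G' g).dist w (rho G' g (g w')) + (transG G' g).dist (rho G' g (g w')) w' :=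
      hT.dist_triangle
    have tr2 : (transG G' g).dist w (rho G' g (g w')) ≤
        (transG G' g).dist w (rho G' g (g w)) +
        (transG G' g).dist (rho G' g (g w)) (rho G' g (g w')) := hT.dist_triangle
    have e2 : (transG G' g).dist (rho G' g (g w')) w' =
        (transG G' g).dist w' (rho G' g (g w')) := SimpleGraph.dist_comm
    have hk1 : 1 ≤ k := Nat.one_le_iff_ne_zero.mpr hk0
    have m1 : 2 * K * K * 1 ≤ 2 * K * K * k := Nat.mul_le_mul_left _ hk1
    have m2 : K * 1 ≤ K * k := Nat.mul_le_mul_left _ hk1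
    have : K * (k + 2 * K) + K + 2 ≤ (2 * K * K + 2 * K + 2) * k := by nlinarith [m1, m2, hk1]
    omega

/-- Degree bound for the transferred graph. -/
lemma trans_deg_le (hG' : G'.Connected) (hH : H.Connected)
    (h1 : ∀ x y, G'.dist x y ≤ K * H.dist (f x) (f y) + K)
    (h2 : ∀ x y, H.dist (f x) (f y) ≤ K * G'.dist x y + K)
    (h3 : ∀ w, H.dist (f (g w)) w ≤ K) (dH : ℕ)
    (hd : ∀ w : W, (H.neighborSet w).ncard ≤ dH) (w : W) :
    ((transG G' g).neighborSet w).ncard ≤ (dH + 1) ^ (4 * K + K * (2 * (K * K + K) + 1)) := by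
  refine le_trans (Set.ncard_le_ncard ?_ (Set.toFinite _)) (my_ball_ncard_le hH dH hd w _)
  intro y hy
  exact trans_adj_bound hG' hH h1 h2 h3 w y hy

/-- Edge count bound for the transferred graph. -/
lemma trans_count (hG' : G'.Connected) :
    (transG G' g).edgeSet.ncard + Nat.card V ≤ Nat.card W + G'.edgeSet.ncard := by
  classical
  set N : Set V := Set.range g with hNdef
  have hN : N.Nonempty := range_nonempty' g
  set A : Set W := {w | repN g (g w) ≠ w} with hAdef
  set Dset : Set V := {x | Dfun G' N x ≠ 0} with hDdef
  set phi : Sym2 V → Sym2 W := Sym2.map (rho G' g) with hphidef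
  set cross : Set (Sym2 V) := {e | e ∈ G'.edgeSet ∧ ¬ (phi e).IsDiag} with hcrossdef
  set img1 : Set (Sym2 W) := (fun w => s(w, repN g (g w))) '' A with himg1def
  -- main inclusion
  have hsub : (transG G' g).edgeSet ⊆ img1 ∪ phi '' cross := by
    intro e he
    induction e with
    | _ a b =>
      rw [SimpleGraph.mem_edgeSet, transG, SimpleGraph.fromRel_adj] at he
      obtain ⟨hne, hrel⟩ := he
      have key : ∀ a b : W, a ≠ b →
          (b = repN g (g a) ∨ ∃ x y, G'.Adj x y ∧ a = rho G' g x ∧ b = rho G' g y) →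
          s(a, b) ∈ img1 ∪ phi '' cross := by
        rintro a b hne (rfl | ⟨x, y, hadj, rfl, rfl⟩)
        · exact Or.inl ⟨a, fun h => hne h.symm, rfl⟩
        · refine Or.inr ⟨s(x, y), ⟨hadj, ?_⟩, rfl⟩
          rw [hphidef]
          simpa [Sym2.mk_isDiag_iff] using hne
      rcases hrel with h | h
      · exact key a b hne h
      · have := key b a (Ne.symm hne) h
        rwa [Sym2.eq_swap] at this
  -- cardinalities
  have c1 : (transG G' g).edgeSet.ncard ≤ A.ncard + cross.ncard := by
    refine le_trans (Set.ncard_le_ncard hsub (Set.toFinite _)) ?_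
    refine le_trans (Set.ncard_union_le _ _) ?_
    have i1 : img1.ncard ≤ A.ncard := Set.ncard_image_le (Set.toFinite _)
    have i2 : (phi '' cross).ncard ≤ cross.ncard := Set.ncard_image_le (Set.toFinite _)
    omega
  have c2 : A.ncard + N.ncard = Nat.card W := by
    have hcompl : Aᶜ = {w | repN g (g w) = w} := by
      ext w; simp [hAdef]
    have hinj : Set.InjOn g Aᶜ := by
      intro w hw w' hw' he
      rw [hcompl] at hw hw'
      simp only [Set.mem_setOf_eq] at hw hw'
      rw [← hw, ← hw', he]
    have himg : g '' Aᶜ = N := by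
      apply Set.Subset.antisymm
      · rintro v ⟨w, -, rfl⟩; exact ⟨w, rfl⟩
      · rintro v ⟨w, rfl⟩
        refine ⟨repN g (g w), ?_, g_repN ⟨w, rfl⟩⟩
        rw [hcompl]
        simp only [Set.mem_setOf_eq]
        rw [g_repN (show g w ∈ Set.range g from ⟨w, rfl⟩)]
    have hsum := Set.ncard_add_ncard_compl A (Set.toFinite _)
    have e : N.ncard = Aᶜ.ncard := by rw [← himg, Set.ncard_image_of_injOn hinj]
    omega
  have c3 : cross.ncard + Dset.ncard ≤ G'.edgeSet.ncard := by
    set internal : Set (Sym2 V) := (fun x => s(x, stepFn G' N x)) '' Dset with hintdef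
    have hint_sub : internal ⊆ G'.edgeSet := by
      rintro e ⟨x, hx, rfl⟩
      exact (stepFn_spec ((guard_iff hG' hN).mpr hx)).1
    have hcross_sub : cross ⊆ G'.edgeSet := fun e he => he.1
    have hdisj : Disjoint cross internal := by
      rw [Set.disjoint_right]
      rintro e ⟨x, hx, rfl⟩ hc
      apply hc.2
      rw [hphidef]
      simp only [Sym2.map_pair_eq, Sym2.mk_isDiag_iff]
      rw [rho, rho, ← nuFn_step ((guard_iff hG' hN).mpr hx)]
    have hcard_int : internal.ncard = Dset.ncard :=
      Set.ncard_image_of_injOn (step_injOn hG' hN)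
    have hunion : (cross ∪ internal).ncard ≤ G'.edgeSet.ncard :=
      Set.ncard_le_ncard (Set.union_subset hcross_sub hint_sub) (Set.toFinite _)
    rw [Set.ncard_union_eq hdisj (Set.toFinite _) (Set.toFinite _)] at hunion
    omega
  have c4 : Dset.ncard + N.ncard = Nat.card V := by
    have hcompl : Dsetᶜ = N := by
      ext x
      simp only [hDdef, Set.mem_compl_iff, Set.mem_setOf_eq, not_not]
      exact Dfun_eq_zero_iff hG' hN
    have := Set.ncard_add_ncard_compl Dset (Set.toFinite _)
    rw [hcompl] at this
    omega
  omega

/-- `|V|` is at most a constant times `|W|`. -/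
lemma card_V_le (hG : G.Connected) (dG : ℕ) (hdG : ∀ v : V, (G.neighborSet v).ncard ≤ dG)
    (h0 : ∀ x y, G.dist x y ≤ K * H.dist (f x) (f y) + K) :
    Nat.card V ≤ Nat.card W * (dG + 1) ^ K := by
  have hsub : (Set.univ : Set V) ⊆ ⋃ w ∈ Set.range f, f ⁻¹' {w} := by
    intro x _
    exact Set.mem_biUnion ⟨x, rfl⟩ rfl
  have hfib : ∀ w ∈ Set.range f, (f ⁻¹' {w}).ncard ≤ (dG + 1) ^ K := by
    rintro w ⟨x₀, rfl⟩
    refine le_trans (Set.ncard_le_ncard ?_ (Set.toFinite _)) (my_ball_ncard_le hG dG hdG x₀ K)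
    intro y hy
    simp only [Set.mem_preimage, Set.mem_singleton_iff] at hy
    have := h0 x₀ y
    rw [hy] at this
    simp only [SimpleGraph.dist_self, Nat.mul_zero, Nat.zero_add] at this
    simpa using this
  calc Nat.card V = (Set.univ : Set V).ncard := (Set.ncard_univ V).symm
    _ ≤ (⋃ w ∈ Set.range f, f ⁻¹' {w}).ncard := Set.ncard_le_ncard hsub (Set.toFinite _)
    _ ≤ (Set.range f).ncard * (dG + 1) ^ K := my_ncard_biUnion_le _ _ _ hfib
    _ ≤ Nat.card W * (dG + 1) ^ K := by
        have : (Set.range f).ncard ≤ Nat.card W := by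
          rw [← Set.ncard_univ]
          exact Set.ncard_le_ncard (Set.subset_univ _) (Set.toFinite _)
        exact Nat.mul_le_mul_right _ this

end Transfer

section DistMul

lemma my_dist_le_mul {W : Type} {H H' : SimpleGraph W} (hH : H.Connected) (hH' : H'.Connected)
    (B : ℕ) (hedge : ∀ a b : W, H'.Adj a b → H.dist a b ≤ B) (u v : W) :
    H.dist u v ≤ B * H'.dist u v := by
  obtain ⟨p, hp⟩ := hH'.exists_walk_length_eq_dist u v
  rw [← hp]
  exact my_dist_le_mul_walk hH B hedge p

end DistMul

section SeqLevel

variable {V : ℕ → Type}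

/-- The edge-to-vertex ratio of a graph sequence. -/
noncomputable def gratio (Gs : GraphSeq V) (n : ℕ) : ℝ :=
  ((Gs.G n).edgeSet.ncard : ℝ) / (Nat.card (V n) : ℝ)

lemma gratio_nonneg (Gs : GraphSeq V) (n : ℕ) : 0 ≤ gratio Gs n := by
  unfold gratio; positivity

lemma card_pos' (Gs : GraphSeq V) (n : ℕ) : 0 < Nat.card (V n) := by
  have := Gs.finite n
  have := (Gs.connected n).nonempty
  exact Nat.card_pos

lemma gratio_le (Gs : GraphSeq V) (n : ℕ) : gratio Gs n ≤ (Gs.degBound : ℝ) := by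
  have := Gs.finite n
  have hpos : (0 : ℝ) < (Nat.card (V n) : ℝ) := by exact_mod_cast card_pos' Gs n
  rw [gratio, div_le_iff₀ hpos]
  have h := edge_le_deg_mul_card (Gs.G n) Gs.degBound (Gs.deg_le n)
  exact_mod_cast h

lemma edgeNumber_eq (Gs : GraphSeq V) : Gs.edgeNumber = liminf (gratio Gs) atTop := rfl

lemma gratio_isBounded_ge (Gs : GraphSeq V) :
    IsBoundedUnder (· ≥ ·) atTop (gratio Gs) :=
  isBoundedUnder_of ⟨0, fun n => gratio_nonneg Gs n⟩

lemma gratio_isBounded_le (Gs : GraphSeq V) :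
    IsBoundedUnder (· ≤ ·) atTop (gratio Gs) :=
  isBoundedUnder_of ⟨(Gs.degBound : ℝ), fun n => gratio_le Gs n⟩

lemma edgeNumber_ge_one (Gs : GraphSeq V) : 1 ≤ Gs.edgeNumber := by
  rw [edgeNumber_eq]
  have hlow : ∀ n, 1 - 1 / (Nat.card (V n) : ℝ) ≤ gratio Gs n := by
    intro n
    have := Gs.finite n
    have hpos : (0 : ℝ) < (Nat.card (V n) : ℝ) := by exact_mod_cast card_pos' Gs n
    have hle := card_le_edge_add_one (Gs.G n) (Gs.connected n)
    have hle' : (Nat.card (V n) : ℝ) ≤ ((Gs.G n).edgeSet.ncard : ℝ) + 1 := by exact_mod_cast hle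
    have h1 : 1 - 1 / (Nat.card (V n) : ℝ) = ((Nat.card (V n) : ℝ) - 1) / (Nat.card (V n) : ℝ) := by
      field_simp
    rw [gratio, h1, div_le_div_iff_of_pos_right hpos]
    nlinarith
  have htend : Tendsto (fun n => 1 - 1 / (Nat.card (V n) : ℝ)) atTop (𝓝 1) := by
    have h1 : Tendsto (fun n => (Nat.card (V n) : ℝ)) atTop atTop :=
      tendsto_natCast_atTop_atTop.comp Gs.card_tendsto
    have h2 : Tendsto (fun n => 1 / (Nat.card (V n) : ℝ)) atTop (𝓝 0) := by
      have h3 : Tendsto (fun n => ((Nat.card (V n) : ℝ))⁻¹) atTop (𝓝 0) := h1.inv_tendsto_atTop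
      simpa [one_div] using h3
    have := Filter.Tendsto.sub
      (tendsto_const_nhds : Tendsto (fun _ : ℕ => (1:ℝ)) atTop (𝓝 1)) h2
    simpa using this
  have hbdd : IsBoundedUnder (· ≥ ·) atTop (fun n => 1 - 1 / (Nat.card (V n) : ℝ)) := by
    refine isBoundedUnder_of ⟨0, fun n => ?_⟩
    have hpos : (1 : ℝ) ≤ (Nat.card (V n) : ℝ) := by exact_mod_cast card_pos' Gs n
    have : 1 / (Nat.card (V n) : ℝ) ≤ 1 := by
      rw [div_le_one (by linarith)]; linarith
    linarith
  calc (1 : ℝ) = liminf (fun n => 1 - 1 / (Nat.card (V n) : ℝ)) atTop := (htend.liminf_eq).symm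
    _ ≤ liminf (gratio Gs) atTop :=
        liminf_le_liminf (Eventually.of_forall hlow) hbdd
          ((gratio_isBounded_le Gs).isCoboundedUnder_ge)

lemma equivSeq_self (Gs : GraphSeq V) : Gs.equivSeq Gs :=
  ⟨1, one_pos, fun n x y => ⟨by omega, by omega⟩⟩

lemma cost_set_nonempty (Gs : GraphSeq V) :
    {x : ℝ | ∃ Hs : GraphSeq V, Gs.equivSeq Hs ∧ x = Hs.edgeNumber}.Nonempty :=
  ⟨Gs.edgeNumber, Gs, equivSeq_self Gs, rfl⟩

lemma cost_set_bddBelow (Gs : GraphSeq V) :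
    BddBelow {x : ℝ | ∃ Hs : GraphSeq V, Gs.equivSeq Hs ∧ x = Hs.edgeNumber} := by
  refine ⟨1, ?_⟩
  rintro y ⟨Hs', -, rfl⟩
  exact edgeNumber_ge_one Hs'

lemma cost_ge_one (Gs : GraphSeq V) : 1 ≤ Gs.cost := by
  rw [GraphSeq.cost]
  refine le_csInf (cost_set_nonempty Gs) ?_
  rintro y ⟨Hs', -, rfl⟩
  exact edgeNumber_ge_one Hs'

lemma freq_lt_of_liminf_lt {u : ℕ → ℝ} {b : ℝ} (hbd : IsBoundedUnder (· ≤ ·) atTop u)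
    (h : liminf u atTop < b) : ∃ᶠ n in atTop, u n < b := by
  by_contra hcon
  rw [not_frequently] at hcon
  have hev : ∀ᶠ n in atTop, b ≤ u n := by
    filter_upwards [hcon] with n hn
    exact not_lt.mp hn
  exact absurd (le_liminf_of_le hbd.isCoboundedUnder_ge hev) (not_le.mpr h)

end SeqLevel

end Core
end MyAux

set_option maxHeartbeats 1000000 in
/-- Having cost `1` is a coarse invariant of graph sequences. -/
theorem stmt2 {V W : ℕ → Type} (Gs : GraphSeq V) (Hs : GraphSeq W)
    (h : coarseEquiv Gs Hs) (hc : Gs.cost = 1) : Hs.cost = 1 := by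
  refine le_antisymm ?_ (cost_ge_one Hs)
  have key : ∀ ε : ℝ, 0 < ε → Hs.cost ≤ 1 + ε := by
    intro ε hε
    obtain ⟨A, hA, hfex⟩ := h
    choose f hfa hfb using hfex
    choose g hg using hfb
    set a : ℕ := ⌈A⌉₊ + 1 with ha_def
    have haA : A ≤ (a : ℝ) := by
      refine le_trans (Nat.le_ceil A) ?_
      exact_mod_cast Nat.le_succ _
    have ha1 : 1 ≤ a := Nat.le_add_left 1 _
    set Ka : ℕ := a * a + a with hKa_def
    have haKa : a ≤ Ka := by rw [hKa_def]; nlinarith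
    have haaKa : a * a ≤ Ka := by rw [hKa_def]; nlinarith
    set M : ℕ := (Gs.degBound + 1) ^ Ka with hM_def
    have hMpos : 0 < M := Nat.pow_pos (Nat.succ_pos _)
    set δ : ℝ := ε / M with hδ_def
    have hMRpos : (0 : ℝ) < (M : ℝ) := by exact_mod_cast hMpos
    have hδpos : 0 < δ := div_pos hε hMRpos
    -- extract a cheap graph sequence equivalent to Gs
    have hlt : Gs.cost < 1 + δ := by rw [hc]; linarith
    rw [GraphSeq.cost] at hlt
    obtain ⟨y, ⟨Gs', hequiv, rfl⟩, hylt⟩ := exists_lt_of_csInf_lt (cost_set_nonempty Gs) hlt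
    obtain ⟨L, hLpos, hLbd⟩ := hequiv
    set K : ℕ := Ka * L + a * L + a with hK_def
    have hKaL : L * Ka ≤ K := by
      rw [hK_def, Nat.mul_comm L Ka]
      exact le_trans (Nat.le_add_right _ _) (Nat.le_add_right _ _)
    have haL : a * L ≤ K := by
      rw [hK_def]
      exact le_trans (Nat.le_add_left _ _) (Nat.le_add_right _ _)
    have haK : a ≤ K := by
      rw [hK_def]
      exact Nat.le_add_left a _
    -- distance comparisons with natural-number constants
    have hq0 : ∀ n x y, (Gs.G n).dist x y ≤ Ka * (Hs.G n).dist (f n x) (f n y) + Ka := by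
      intro n x y
      have lo := (hfa n x y).1
      have hd0 : (0 : ℝ) ≤ ((Hs.G n).dist (f n x) (f n y) : ℝ) := Nat.cast_nonneg _
      have h2 : ((Gs.G n).dist x y : ℝ) / A ≤ ((Hs.G n).dist (f n x) (f n y) : ℝ) + A := by
        linarith
      have h3 : ((Gs.G n).dist x y : ℝ) ≤ (((Hs.G n).dist (f n x) (f n y) : ℝ) + A) * A :=
        (div_le_iff₀ hA).mp h2
      have e1 : (a : ℝ) ≤ (Ka : ℝ) := by exact_mod_cast haKa
      have e2 : (a : ℝ) * (a : ℝ) ≤ (Ka : ℝ) := by exact_mod_cast haaKa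
      have p1 : A * ((Hs.G n).dist (f n x) (f n y) : ℝ)
          ≤ (a : ℝ) * ((Hs.G n).dist (f n x) (f n y) : ℝ) :=
        mul_le_mul_of_nonneg_right haA hd0
      have p2 : A * A ≤ (a : ℝ) * (a : ℝ) :=
        mul_le_mul haA haA hA.le (le_trans hA.le haA)
      have p3 : (a : ℝ) * ((Hs.G n).dist (f n x) (f n y) : ℝ)
          ≤ (Ka : ℝ) * ((Hs.G n).dist (f n x) (f n y) : ℝ) :=
        mul_le_mul_of_nonneg_right e1 hd0
      have h5 : ((Gs.G n).dist x y : ℝ)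
          ≤ (Ka : ℝ) * ((Hs.G n).dist (f n x) (f n y) : ℝ) + (Ka : ℝ) := by nlinarith
      exact_mod_cast h5
    have hq3 : ∀ n w, (Hs.G n).dist (f n (g n w)) w ≤ K := by
      intro n w
      have h1 := hg n w
      have h2 : ((Hs.G n).dist (f n (g n w)) w : ℝ) ≤ (K : ℝ) := by
        refine le_trans h1 (le_trans haA ?_)
        exact_mod_cast haK
      exact_mod_cast h2
    have hq1 : ∀ n x y, (Gs'.G n).dist x y ≤ K * (Hs.G n).dist (f n x) (f n y) + K := by
      intro n x y
      have e1 : (Gs'.G n).dist x y ≤ L * (Gs.G n).dist x y := (hLbd n x y).1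
      have e2 : L * (Gs.G n).dist x y ≤ L * (Ka * (Hs.G n).dist (f n x) (f n y) + Ka) :=
        Nat.mul_le_mul_left _ (hq0 n x y)
      have e3 : L * (Ka * (Hs.G n).dist (f n x) (f n y) + Ka)
          = (L * Ka) * (Hs.G n).dist (f n x) (f n y) + L * Ka := by ring
      have e4 : (L * Ka) * (Hs.G n).dist (f n x) (f n y)
          ≤ K * (Hs.G n).dist (f n x) (f n y) := Nat.mul_le_mul_right _ hKaL
      omega
    have hq2 : ∀ n x y, (Hs.G n).dist (f n x) (f n y) ≤ K * (Gs'.G n).dist x y + K := by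
      intro n x y
      have hi := (hfa n x y).2
      have e1 : (Gs.G n).dist x y ≤ L * (Gs'.G n).dist x y := (hLbd n x y).2
      set dG' : ℝ := ((Gs'.G n).dist x y : ℝ) with hdG'
      have hd0 : (0 : ℝ) ≤ dG' := Nat.cast_nonneg _
      have e2 : ((Gs.G n).dist x y : ℝ) ≤ (L : ℝ) * dG' := by
        rw [hdG']
        exact_mod_cast e1
      have eaL : (a : ℝ) * (L : ℝ) ≤ (K : ℝ) := by exact_mod_cast haL
      have eaK : (a : ℝ) ≤ (K : ℝ) := by exact_mod_cast haK
      have hdG0 : (0 : ℝ) ≤ ((Gs.G n).dist x y : ℝ) := Nat.cast_nonneg _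
      have q1 : A * ((Gs.G n).dist x y : ℝ) ≤ (a : ℝ) * ((Gs.G n).dist x y : ℝ) :=
        mul_le_mul_of_nonneg_right haA hdG0
      have q2 : (a : ℝ) * ((Gs.G n).dist x y : ℝ) ≤ (a : ℝ) * ((L : ℝ) * dG') := by
        refine mul_le_mul_of_nonneg_left ?_ (by positivity)
        exact e2
      have q3 : ((a : ℝ) * (L : ℝ)) * dG' ≤ (K : ℝ) * dG' :=
        mul_le_mul_of_nonneg_right eaL hd0
      have e3 : ((Hs.G n).dist (f n x) (f n y) : ℝ) ≤ (K : ℝ) * dG' + (K : ℝ) := by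
        nlinarith
      rw [hdG'] at e3
      exact_mod_cast e3
    -- the transferred graph sequence
    set B0 : ℕ := 4 * K + K * (2 * (K * K + K) + 1) with hB0_def
    set B1 : ℕ := 2 * K * K + 2 * K + 2 with hB1_def
    set Hs2 : GraphSeq W :=
      { G := fun n =>
          letI := (Hs.connected n).nonempty
          transG (Gs'.G n) (g n)
        finite := Hs.finite
        connected := fun n => by
          haveI := (Hs.connected n).nonempty
          haveI := Gs.finite n
          haveI := Hs.finite n
          exact transG_connected (Gs'.connected n)
        degBound := (Hs.degBound + 1) ^ B0
        deg_le := fun n w => by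
          haveI := (Hs.connected n).nonempty
          haveI := Gs.finite n
          haveI := Hs.finite n
          exact trans_deg_le (Gs'.connected n) (Hs.connected n) (hq1 n) (hq2 n) (hq3 n)
            Hs.degBound (Hs.deg_le n) w
        card_tendsto := Hs.card_tendsto } with hHs2_def
    have hequiv2 : Hs.equivSeq Hs2 := by
      refine ⟨B0 + B1, by positivity, fun n x y => ?_⟩
      haveI := (Hs.connected n).nonempty
      haveI := Gs.finite n
      haveI := Hs.finite n
      have hTn : Hs2.G n = transG (Gs'.G n) (g n) := rfl
      rw [hTn]
      constructor
      · have h1 := trans_dist_le (Gs'.connected n) (Hs.connected n) (hq1 n) (hq3 n) x y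
        have h2 : B1 * (Hs.G n).dist x y ≤ (B0 + B1) * (Hs.G n).dist x y :=
          Nat.mul_le_mul_right _ (by omega)
        exact le_trans h1 h2
      · have h1 := my_dist_le_mul (Hs.connected n) (transG_connected (Gs'.connected n)) B0
          (trans_adj_bound (Gs'.connected n) (Hs.connected n) (hq1 n) (hq2 n) (hq3 n)) x y
        have h2 : B0 * (transG (Gs'.G n) (g n)).dist x y
            ≤ (B0 + B1) * (transG (Gs'.G n) (g n)).dist x y :=
          Nat.mul_le_mul_right _ (by omega)
        exact le_trans h1 h2
    -- bound the edge number of the transferred sequence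
    have hbound : Hs2.edgeNumber ≤ 1 + ε := by
      rw [edgeNumber_eq]
      have hfreq : ∃ᶠ n in atTop, gratio Gs' n < 1 + δ := by
        refine freq_lt_of_liminf_lt (gratio_isBounded_le Gs') ?_
        rw [← edgeNumber_eq]
        exact hylt
      refine liminf_le_of_frequently_le ?_ (gratio_isBounded_ge Hs2)
      refine hfreq.mono ?_
      intro n hn
      haveI := (Hs.connected n).nonempty
      haveI := Gs.finite n
      haveI := Hs.finite n
      have hVpos : (0 : ℝ) < (Nat.card (V n) : ℝ) := by exact_mod_cast card_pos' Gs n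
      have hWpos : (0 : ℝ) < (Nat.card (W n) : ℝ) := by exact_mod_cast card_pos' Hs n
      have hcount := trans_count (g := g n) (Gs'.connected n)
      have hcV_le : Nat.card (V n) ≤ Nat.card (W n) * M :=
        card_V_le (Gs.connected n) Gs.degBound (Gs.deg_le n) (hq0 n)
      rw [gratio, div_lt_iff₀ hVpos] at hn
      have hcount' : ((transG (Gs'.G n) (g n)).edgeSet.ncard : ℝ) + (Nat.card (V n) : ℝ)
          ≤ (Nat.card (W n) : ℝ) + ((Gs'.G n).edgeSet.ncard : ℝ) := by
        exact_mod_cast hcount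
      have hV' : (Nat.card (V n) : ℝ) ≤ (Nat.card (W n) : ℝ) * (M : ℝ) := by
        exact_mod_cast hcV_le
      have hδM : δ * (M : ℝ) = ε := by
        rw [hδ_def]
        field_simp
      have k1 : δ * (Nat.card (V n) : ℝ) ≤ δ * ((Nat.card (W n) : ℝ) * (M : ℝ)) :=
        mul_le_mul_of_nonneg_left hV' hδpos.le
      have k2 : δ * ((Nat.card (W n) : ℝ) * (M : ℝ)) = ε * (Nat.card (W n) : ℝ) := by
        rw [← hδM]; ring
      have r1 : (1 + δ) * (Nat.card (V n) : ℝ)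
          = (Nat.card (V n) : ℝ) + δ * (Nat.card (V n) : ℝ) := by ring
      have r2 : (1 + ε) * (Nat.card (W n) : ℝ)
          = (Nat.card (W n) : ℝ) + ε * (Nat.card (W n) : ℝ) := by ring
      have hTn : Hs2.G n = transG (Gs'.G n) (g n) := rfl
      rw [gratio, hTn, div_le_iff₀ hWpos]
      linarith
    have hmem : Hs2.edgeNumber ∈
        {x : ℝ | ∃ Hs' : GraphSeq W, Hs.equivSeq Hs' ∧ x = Hs'.edgeNumber} :=
      ⟨Hs2, hequiv2, rfl⟩
    have h1 : Hs.cost ≤ Hs2.edgeNumber := by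
      rw [GraphSeq.cost]
      exact csInf_le (cost_set_bddBelow Hs) hmem
    exact le_trans h1 hbound
  exact le_of_forall_pos_le_add key
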